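/- Let T be an observation tree with basis S and frontier F, where S is complete, and let H be a complete Mealy machine containing the basis. Suppose σ ∈ I* is such that δ^T(q0^T, σ) is defined, r := δ^T(q0^T, σ) ∈ S ∪ F, and q := δ^H(q0^H, σ) satisfies q # r in T. Then H is not a hypothesis for T. -/

import Mathlib

open scoped Classical

/-- A Mealy machine over input alphabet `I` and output alphabet `O`, with state
type `Q`, initial state `q0`, and a partial combined output/transition map
`trans : Q × I ⇀ O × Q` (so the output and transition functions are defined on
exactly the same pairs). -/
structure Mealy (Q I O : Type) where
  q0 : Q
  trans : Q → I → Option (O × Q)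

namespace Mealy

variable {Q Q' I O : Type}

/-- Extension of the combined output/transition map to input words. -/
def stepStar (M : Mealy Q I O) : Q → List I → Option (List O × Q)
  | q, [] => some ([], q)
  | q, i :: σ => (M.trans q i).bind fun p =>
      (stepStar M p.2 σ).map fun r => (p.1 :: r.1, r.2)

/-- `λ(q, σ)`: the output word produced from `q` on input word `σ` (if defined);
this is also the semantics `⟦q⟧ : I* ⇀ O*` of the state `q`. -/
def outStar (M : Mealy Q I O) (q : Q) (σ : List I) : Option (List O) :=
  (M.stepStar q σ).map Prod.fst

/-- `δ(q, σ)`: the state reached from `q` on input word `σ` (if defined). -/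
def delStar (M : Mealy Q I O) (q : Q) (σ : List I) : Option Q :=
  (M.stepStar q σ).map Prod.snd

/-- `σ ⊢ q # p`: the word `σ` witnesses apartness of `q` and `p`. -/
def ApartW (M : Mealy Q I O) (σ : List I) (q p : Q) : Prop :=
  (M.outStar q σ).isSome ∧ (M.outStar p σ).isSome ∧ M.outStar q σ ≠ M.outStar p σ

/-- `q # p`: states `q` and `p` are apart. -/
def Apart (M : Mealy Q I O) (q p : Q) : Prop := ∃ σ, M.ApartW σ q p

/-- `q ≈ r`: states `q` (of `M`) and `r` (of `N`) are equivalent, i.e. have equal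
semantics `⟦q⟧ = ⟦r⟧` as partial maps `I* ⇀ O*`. -/
def StateEquiv (M : Mealy Q I O) (N : Mealy Q' I O) (q : Q) (r : Q') : Prop :=
  ∀ σ, M.outStar q σ = N.outStar r σ

/-- A functional simulation `f : M → N`. -/
def FunSim (M : Mealy Q I O) (N : Mealy Q' I O) (f : Q → Q') : Prop :=
  f M.q0 = N.q0 ∧
    ∀ q i o q'', M.trans q i = some (o, q'') → N.trans (f q) i = some (o, f q'')

/-- A Mealy machine is complete if its transition map is total. -/
def Complete (M : Mealy Q I O) : Prop := ∀ q i, (M.trans q i).isSome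

/-- A Mealy machine is a tree if every state is reached from the root by a
unique input word (its access sequence). -/
def IsTree (M : Mealy Q I O) : Prop :=
  ∀ q : Q, ∃! σ : List I, M.delStar M.q0 σ = some q

/-- `S` is a basis of the observation tree `T`: a subtree containing the root
whose states are pairwise apart. -/
structure IsBasis (T : Mealy Q I O) (S : Set Q) : Prop where
  root_mem : T.q0 ∈ S
  subtree_closed : ∀ q i o q', T.trans q i = some (o, q') → q' ∈ S → q ∈ S
  pairwise_apart : ∀ p ∈ S, ∀ q ∈ S, p ≠ q → T.Apart p q

/-- The frontier `F`: immediate non-basis successors of basis states. -/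
def frontier (T : Mealy Q I O) (S : Set Q) : Set Q :=
  {q' | q' ∉ S ∧ ∃ q ∈ S, ∃ i o, T.trans q i = some (o, q')}

/-- The basis `S` is complete: each basis state has a transition for each input. -/
def BasisComplete (T : Mealy Q I O) (S : Set Q) : Prop :=
  ∀ q ∈ S, ∀ i : I, (T.trans q i).isSome

/-- A Mealy machine `H` with state set `S` contains the basis `S` of `T`:
`δ^H(q0^H, access(q)) = q` for every `q ∈ S`. -/
def ContainsBasis (T : Mealy Q I O) (S : Set Q) (H : Mealy ↥S I O) : Prop :=
  ∀ (q : ↥S) (σ : List I), T.delStar T.q0 σ = some (q : Q) → H.delStar H.q0 σ = some q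

/-- `H` is a hypothesis for the observation tree `T` with basis `S`. -/
def IsHypothesis (T : Mealy Q I O) (S : Set Q) (H : Mealy ↥S I O) : Prop :=
  H.Complete ∧ ContainsBasis T S H ∧
    ∀ (q : ↥S) (i : I) (o' : O) (p' : ↥S), H.trans q i = some (o', p') →
      ∀ (o : O) (p : Q), T.trans (q : Q) i = some (o, p) → o = o' ∧ ¬ T.Apart p (p' : Q)

/-- The equivalence `≈` on the states of a single machine, as a setoid. -/
def equivSetoid (M : Mealy Q I O) : Setoid Q :=
  ⟨fun q r => M.StateEquiv M q r,
   ⟨fun _ _ => rfl, fun h σ => (h σ).symm, fun h1 h2 σ => (h1 σ).trans (h2 σ)⟩⟩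

/-- `R` is a bisimulation between `M` and `N`. -/
def IsBisimulation (M : Mealy Q I O) (N : Mealy Q' I O) (R : Q → Q' → Prop) : Prop :=
  R M.q0 N.q0 ∧
    ∀ q r, R q r → ∀ i o q', M.trans q i = some (o, q') →
      ∃ r', N.trans r i = some (o, r') ∧ R q' r'

end Mealy

namespace Mealy

theorem stepStar_append {Q I O : Type} (M : Mealy Q I O) (q : Q) (σ τ : List I) :
    M.stepStar q (σ ++ τ) = (M.stepStar q σ).bind fun p =>
      (M.stepStar p.2 τ).map fun r => (p.1 ++ r.1, r.2) := by
  induction σ generalizing q with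
  | nil =>
    simp [stepStar]
  | cons i σ ih =>
    simp only [List.cons_append, stepStar]
    cases M.trans q i with
    | none => simp
    | some p =>
      rw [Option.bind_some, Option.bind_some, ih]
      cases h : M.stepStar p.2 σ with
      | none => simp
      | some w =>
        simp only [Option.bind_some, Option.map_map]
        exact Option.map_congr fun a _ => rfl

theorem delStar_append {Q I O : Type} (M : Mealy Q I O) (q : Q) (σ τ : List I) :
    M.delStar q (σ ++ τ) = (M.delStar q σ).bind fun p => M.delStar p τ := by
  simp only [delStar, stepStar_append]
  cases M.stepStar q σ with
  | none => simp
  | some w =>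
    simp only [Option.bind_some, Option.map_map]
    exact Option.map_congr fun a _ => rfl

theorem apart_symm {Q I O : Type} {M : Mealy Q I O} {q p : Q}
    (h : M.Apart q p) : M.Apart p q := by
  obtain ⟨σ, h1, h2, h3⟩ := h
  exact ⟨σ, h2, h1, fun e => h3 e.symm⟩

theorem apart_irrefl {Q I O : Type} {M : Mealy Q I O} {q : Q}
    (h : M.Apart q q) : False := by
  obtain ⟨σ, _, _, h3⟩ := h
  exact h3 rfl

end Mealy

/-- Let `T` be an observation tree with complete basis `S` and
`H` a complete Mealy machine containing the basis.  If `σ ∈ I*` is such that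
`r := δ^T(q0^T, σ)` is defined and lies in `S ∪ F`, and `q := δ^H(q0^H, σ)`
satisfies `q # r` in `T`, then `H` is not a hypothesis for `T`. -/
theorem statement_14 {Q I O : Type} [Fintype I] [Fintype Q]
    (T : Mealy Q I O) (htree : T.IsTree) (S : Set Q) (hS : T.IsBasis S)
    (hcomp : T.BasisComplete S) (H : Mealy ↥S I O)
    (hHcomplete : H.Complete) (hHbasis : T.ContainsBasis S H)
    (σ : List I) (r : Q) (hr : T.delStar T.q0 σ = some r)
    (hrSF : r ∈ S ∪ T.frontier S)
    (q : ↥S) (hq : H.delStar H.q0 σ = some q)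
    (hap : T.Apart (q : Q) r) :
    ¬ T.IsHypothesis S H := by
  rintro ⟨hHc, hHb, hcond⟩
  rcases hrSF with hrS | hrF
  · -- r ∈ S: determinism of H.delStar forces q = r, contradicting apartness
    have h1 := hHb ⟨r, hrS⟩ σ hr
    rw [hq] at h1
    have h2 : q = ⟨r, hrS⟩ := Option.some.inj h1
    have : (q : Q) = r := by rw [h2]
    rw [this] at hap
    exact Mealy.apart_irrefl hap
  · obtain ⟨hrnS, p, hpS, i, o, htrans⟩ := hrF
    obtain ⟨τ, hτ, _⟩ := htree p
    have hτr : T.delStar T.q0 (τ ++ [i]) = some r := by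
      rw [Mealy.delStar_append, hτ]
      simp [Mealy.delStar, Mealy.stepStar, htrans]
    obtain ⟨ρ, _, huniqr⟩ := htree r
    have hσ : σ = τ ++ [i] := by rw [huniqr σ hr, huniqr _ hτr]
    subst hσ
    have hHp : H.delStar H.q0 τ = some ⟨p, hpS⟩ := hHb ⟨p, hpS⟩ τ hτ
    rw [Mealy.delStar_append, hHp, Option.bind_some] at hq
    obtain ⟨w, hw⟩ := Option.isSome_iff_exists.mp (hHc ⟨p, hpS⟩ i)
    have hq' : H.trans ⟨p, hpS⟩ i = some (w.1, q) := by
      simp [Mealy.delStar, Mealy.stepStar, hw] at hq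
      rw [hw, ← hq]
    have := hcond ⟨p, hpS⟩ i w.1 q hq' o r htrans
    exact this.2 (Mealy.apart_symm hap)
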